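/- For indeterminates q, A and each k ≥ 0, the q-binomial theorem gives ∑_{k_1 + 2k_2 + 3k_3 + ⋯ = k} ∏_{n ≥ 1} (1/(k_n! n^{k_n})) · ((A^n - A^{-n})/(1 - q^n))^{k_n} = ∏_{j=1}^k (A - A^{-1} q^{j-1})/(1 - q^j), as an identity of rational functions (or formal Laurent series) in q and A. -/

import Mathlib

open Finset

set_option linter.unusedSectionVars false

namespace QBinAux

variable {K : Type*} [Field K] [CharZero K]

noncomputable def f (p : ℕ → K) (m c : ℕ) : K :=
  1 / ((c.factorial : K) * (m : K) ^ c) * (p m) ^ c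

noncomputable def w (p : ℕ → K) (l : ℕ) {j : ℕ} (μ : Nat.Partition j) : K :=
  ∏ m ∈ Icc 1 l, f p m (μ.parts.count m)

noncomputable def E (p : ℕ → K) (j : ℕ) : K :=
  ∑ μ : Nat.Partition j, w p j μ

lemma f_zero (p : ℕ → K) (m : ℕ) : f p m 0 = 1 := by simp [f]

lemma f_succ (p : ℕ → K) {m : ℕ} (hm : m ≠ 0) (c : ℕ) :
    ((m : K) * ((c : K) + 1)) * f p m (c + 1) = p m * f p m c := by
  have h1 : (m : K) ≠ 0 := Nat.cast_ne_zero.mpr hm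
  have h2 : (c.factorial : K) ≠ 0 := Nat.cast_ne_zero.mpr c.factorial_ne_zero
  have h3 : ((c : K) + 1) ≠ 0 := Nat.cast_add_one_ne_zero c
  simp only [f, Nat.factorial_succ, pow_succ, Nat.cast_mul, Nat.cast_add, Nat.cast_one]
  field_simp

lemma count_zero_of_gt {j m : ℕ} (μ : Nat.Partition j) (h : j < m) :
    μ.parts.count m = 0 := by
  rw [Multiset.count_eq_zero]
  intro hm
  have := Multiset.single_le_sum (fun x _ => Nat.zero_le x) m hm
  rw [μ.parts_sum] at this
  omega

lemma mem_Icc_of_mem_parts {j m : ℕ} (μ : Nat.Partition j) (h : m ∈ μ.parts) :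
    m ∈ Icc 1 j := by
  have h1 := μ.parts_pos h
  have h2 := Multiset.single_le_sum (fun x _ => Nat.zero_le x) m h
  rw [μ.parts_sum] at h2
  simp only [mem_Icc]; omega

lemma w_congr (p : ℕ → K) {j l : ℕ} (h : j ≤ l) (μ : Nat.Partition j) :
    w p l μ = w p j μ := by
  unfold w
  refine (Finset.prod_subset (Finset.Icc_subset_Icc_right h) ?_).symm
  intro m hm hnm
  simp only [mem_Icc] at hm hnm
  have : j < m := by omega
  rw [count_zero_of_gt μ this, f_zero]

lemma E_zero (p : ℕ → K) : E p 0 = 1 := by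
  rw [E, Fintype.sum_unique]
  simp [w]

/-- insertion of a part `n` into a partition of `j - n`. -/
def ins {j n : ℕ} (hn : 1 ≤ n) (hnj : n ≤ j) (μ' : Nat.Partition (j - n)) :
    Nat.Partition j where
  parts := n ::ₘ μ'.parts
  parts_pos := by
    intro i hi
    rcases Multiset.mem_cons.mp hi with h | h
    · omega
    · exact μ'.parts_pos h
  parts_sum := by
    rw [Multiset.sum_cons, μ'.parts_sum]
    omega

/-- removal of a part `n` from a partition of `j`. -/
def era {j n : ℕ} (μ : Nat.Partition j) (h : n ∈ μ.parts) :
    Nat.Partition (j - n) where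
  parts := μ.parts.erase n
  parts_pos := fun hi => μ.parts_pos (Multiset.mem_of_mem_erase hi)
  parts_sum := by
    have h1 : (n ::ₘ μ.parts.erase n).sum = μ.parts.sum := by
      rw [Multiset.cons_erase h]
    rw [Multiset.sum_cons, μ.parts_sum] at h1
    omega

lemma key_step (p : ℕ → K) {j n : ℕ} (hn : 1 ≤ n) (hnj : n ≤ j)
    (μ' : Nat.Partition (j - n)) :
    ((n : K) * ((ins hn hnj μ').parts.count n : K)) * w p j (ins hn hnj μ') =
      p n * w p j μ' := by
  have hmem : n ∈ Icc 1 j := by simp only [mem_Icc]; omega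
  have hc : (ins hn hnj μ').parts.count n = μ'.parts.count n + 1 := by
    simp [ins, Multiset.count_cons_self]
  rw [hc]
  set c := μ'.parts.count n with hc'
  have h1 : w p j (ins hn hnj μ') =
      f p n (c + 1) * ∏ m ∈ (Icc 1 j).erase n, f p m (μ'.parts.count m) := by
    rw [w, ← Finset.mul_prod_erase _ _ hmem, hc]
    congr 1
    refine Finset.prod_congr rfl fun m hm => ?_
    have hmn : m ≠ n := (Finset.mem_erase.mp hm).1
    simp [ins, Multiset.count_cons_of_ne hmn]
  have h2 : w p j μ' =
      f p n c * ∏ m ∈ (Icc 1 j).erase n, f p m (μ'.parts.count m) := by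
    rw [w, ← Finset.mul_prod_erase _ _ hmem]
  rw [h1, h2, ← mul_assoc, ← mul_assoc]
  push_cast
  rw [f_succ p (by omega : n ≠ 0) c]

lemma E_rec (p : ℕ → K) (j : ℕ) :
    (j : K) * E p j = ∑ n ∈ Icc 1 j, p n * E p (j - n) := by
  -- step 1: j = ∑ n ∈ Icc 1 j, n * count n
  have hsum : ∀ μ : Nat.Partition j, (j : K) = ∑ n ∈ Icc 1 j, ((n * μ.parts.count n : ℕ) : K) := by
    intro μ
    have h0 : μ.parts.sum = ∑ m ∈ μ.parts.toFinset, μ.parts.count m • m := by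
      conv_lhs => rw [← Multiset.map_id μ.parts]
      exact Finset.sum_multiset_map_count μ.parts id
    have h1 : (j : ℕ) = ∑ n ∈ Icc 1 j, n * μ.parts.count n := by
      have h2 : μ.parts.sum = ∑ n ∈ Icc 1 j, n * μ.parts.count n := by
        rw [h0]
        rw [Finset.sum_subset (fun m hm => mem_Icc_of_mem_parts μ (Multiset.mem_toFinset.mp hm))]
        · exact Finset.sum_congr rfl fun m _ => by rw [smul_eq_mul]; ring
        · intro m _ hm
          rw [Multiset.count_eq_zero_of_notMem (fun h => hm (Multiset.mem_toFinset.mpr h))]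
          simp
      rw [← h2, μ.parts_sum]
    calc (j : K) = ((∑ n ∈ Icc 1 j, n * μ.parts.count n : ℕ) : K) := by rw [← h1]
    _ = _ := by push_cast; rfl
  rw [E, Finset.mul_sum]
  calc ∑ μ : Nat.Partition j, (j : K) * w p j μ
      = ∑ μ : Nat.Partition j, ∑ n ∈ Icc 1 j, ((n : K) * (μ.parts.count n : K)) * w p j μ := by
        refine Finset.sum_congr rfl fun μ _ => ?_
        rw [hsum μ, Finset.sum_mul]
        push_cast
        exact Finset.sum_congr rfl fun n _ => by ring
    _ = ∑ n ∈ Icc 1 j, ∑ μ : Nat.Partition j, ((n : K) * (μ.parts.count n : K)) * w p j μ :=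
        Finset.sum_comm
    _ = ∑ n ∈ Icc 1 j, p n * E p (j - n) := by
        refine Finset.sum_congr rfl fun n hn => ?_
        simp only [mem_Icc] at hn
        obtain ⟨hn1, hnj⟩ := hn
        -- restrict to partitions containing n
        rw [← Finset.sum_filter_of_ne (p := fun μ : Nat.Partition j => n ∈ μ.parts)
          (fun μ _ hne => by
            by_contra hmem
            rw [Multiset.count_eq_zero_of_notMem hmem] at hne
            simp at hne)]
        rw [E, Finset.mul_sum]
        refine Finset.sum_bij' (fun μ hμ => era μ (Finset.mem_filter.mp hμ).2)
          (fun μ' _ => ins hn1 hnj μ') ?_ ?_ ?_ ?_ ?_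
        · intro a ha; exact Finset.mem_univ _
        · intro μ' _
          refine Finset.mem_filter.mpr ⟨Finset.mem_univ _, ?_⟩
          simp [ins]
        · intro μ hμ
          apply Nat.Partition.ext
          simp only [ins, era]
          exact Multiset.cons_erase (Finset.mem_filter.mp hμ).2
        · intro μ' _
          apply Nat.Partition.ext
          simp [ins, era, Multiset.erase_cons_head]
        · intro μ hμ
          have hmem := (Finset.mem_filter.mp hμ).2
          have h1 : ins hn1 hnj (era μ hmem) = μ := by
            apply Nat.Partition.ext
            simp only [ins, era]
            exact Multiset.cons_erase hmem
          have h2 := key_step p hn1 hnj (era μ hmem)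
          rw [h1] at h2
          rw [h2, w_congr p (Nat.sub_le j n)]



section
variable (A q : K)

noncomputable def X (j : ℕ) : K := ∏ i ∈ Icc 1 j, (A - A⁻¹ * q ^ (i - 1)) / (1 - q ^ i)

noncomputable def pf (n : ℕ) : K := (A ^ n - A⁻¹ ^ n) / (1 - q ^ n)

noncomputable def U (j : ℕ) : K :=
  ∑ i ∈ range j, A ^ i * ((A - A⁻¹) * (q ^ (j - 1 - i) * X A q (j - 1 - i)))

noncomputable def Y (j : ℕ) : K := ∑ i ∈ range j, pf A q (i + 1) * X A q (j - 1 - i)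

noncomputable def Z (j : ℕ) : K :=
  ∑ i ∈ range j, pf A q (i + 1) * (q ^ (j - 1 - i) * X A q (j - 1 - i))

noncomputable def V (j : ℕ) : K :=
  ∑ i ∈ range j, (A ^ (i + 1) - A⁻¹ ^ (i + 1)) * (q ^ (j - 1 - i) * X A q (j - 1 - i))

lemma X_zero : X A q 0 = 1 := by simp [X]

variable {k : ℕ} (hq : ∀ j : ℕ, 1 ≤ j → j ≤ k → q ^ j ≠ 1)

include hq in
lemma one_sub_ne {j : ℕ} (h1 : 1 ≤ j) (h2 : j ≤ k) : (1 : K) - q ^ j ≠ 0 :=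
  sub_ne_zero.mpr fun h => hq j h1 h2 h.symm

include hq in
lemma X_twoterm {m : ℕ} (h2 : m + 1 ≤ k) :
    (1 - q ^ (m + 1)) * X A q (m + 1) = X A q m * (A - A⁻¹ * q ^ m) := by
  have hne := one_sub_ne q hq (Nat.le_add_left 1 m) h2
  rw [X, Finset.prod_Icc_succ_top (by omega), show m + 1 - 1 = m from rfl,
    mul_comm ((1:K) - q ^ (m + 1)), mul_assoc, div_mul_cancel₀ _ hne, ← X]

include hq in
lemma pf_mul {n : ℕ} (h1 : 1 ≤ n) (h2 : n ≤ k) :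
    pf A q n * (1 - q ^ n) = A ^ n - A⁻¹ ^ n :=
  div_mul_cancel₀ _ (one_sub_ne q hq h1 h2)

include hq in
lemma U_eq : ∀ j ≤ k, U A q j = (1 - q ^ j) * X A q j := by
  intro j
  induction j with
  | zero => intro _; simp [U, X_zero]
  | succ m ih =>
    intro hjk
    have hUrec : U A q (m + 1) = A * U A q m + (A - A⁻¹) * (q ^ m * X A q m) := by
      rw [U, Finset.sum_range_succ']
      have h1 : ∀ i ∈ range m,
          A ^ (i + 1) * ((A - A⁻¹) * (q ^ (m + 1 - 1 - (i + 1)) * X A q (m + 1 - 1 - (i + 1)))) =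
          A * (A ^ i * ((A - A⁻¹) * (q ^ (m - 1 - i) * X A q (m - 1 - i)))) := by
        intro i hi
        have : m + 1 - 1 - (i + 1) = m - 1 - i := by omega
        rw [this, pow_succ]
        ring
      rw [Finset.sum_congr rfl h1, ← Finset.mul_sum, ← U]
      have : m + 1 - 1 - 0 = m := by omega
      rw [this]
      ring
    rw [hUrec, ih (by omega)]
    rw [X_twoterm A q hq hjk]
    ring

lemma V_sub (m : ℕ) :
    V A q (m + 1) - A⁻¹ * V A q m = U A q (m + 1) := by
  have hAV : A⁻¹ * V A q m =
      ∑ i ∈ range (m + 1), A⁻¹ * ((A ^ i - A⁻¹ ^ i) * (q ^ (m - i) * X A q (m - i))) := by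
    rw [Finset.sum_range_succ', V, Finset.mul_sum]
    have h0 : A⁻¹ * ((A ^ 0 - A⁻¹ ^ 0) * (q ^ (m - 0) * X A q (m - 0))) = 0 := by
      simp
    rw [h0, add_zero]
    refine Finset.sum_congr rfl fun i hi => ?_
    have : m - (i + 1) = m - 1 - i := by omega
    rw [this]
  rw [hAV, V, ← Finset.sum_sub_distrib, U]
  refine Finset.sum_congr rfl fun i hi => ?_
  have h1 : m + 1 - 1 - i = m - i := by omega
  rw [h1, pow_succ, pow_succ]
  ring

include hq in
lemma ZV_eq {j : ℕ} (hj : j ≤ k) :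
    Z A q j = V A q j + q ^ j * Y A q j := by
  rw [Z, V, Y, Finset.mul_sum, ← Finset.sum_add_distrib]
  refine Finset.sum_congr rfl fun i hi => ?_
  rw [Finset.mem_range] at hi
  have hp := pf_mul A q hq (Nat.le_add_left 1 i) (by omega : i + 1 ≤ k)
  have hqq : q ^ (i + 1) * q ^ (j - 1 - i) = q ^ j := by
    rw [← pow_add]
    congr 1
    omega
  have : (A ^ (i + 1) - A⁻¹ ^ (i + 1)) * (q ^ (j - 1 - i) * X A q (j - 1 - i)) =
      pf A q (i + 1) * (q ^ (j - 1 - i) * X A q (j - 1 - i)) -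
        q ^ j * (pf A q (i + 1) * X A q (j - 1 - i)) := by
    rw [← hp, ← hqq]
    ring
  rw [this]
  ring

include hq in
lemma YZ_eq {m : ℕ} (hm : m + 1 ≤ k) :
    Y A q (m + 1) - Z A q (m + 1) = A * Y A q m - A⁻¹ * Z A q m := by
  rw [Y, Z, ← Finset.sum_sub_distrib, Finset.sum_range_succ]
  have h0 : pf A q (m + 1) * X A q (m + 1 - 1 - m) -
      pf A q (m + 1) * (q ^ (m + 1 - 1 - m) * X A q (m + 1 - 1 - m)) = 0 := by
    have : m + 1 - 1 - m = 0 := by omega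
    rw [this]
    simp
  rw [h0, add_zero]
  have hterm : ∀ i ∈ range m,
      pf A q (i + 1) * X A q (m + 1 - 1 - i) -
        pf A q (i + 1) * (q ^ (m + 1 - 1 - i) * X A q (m + 1 - 1 - i)) =
      A * (pf A q (i + 1) * X A q (m - 1 - i)) -
        A⁻¹ * (pf A q (i + 1) * (q ^ (m - 1 - i) * X A q (m - 1 - i))) := by
    intro i hi
    rw [Finset.mem_range] at hi
    have h1 : m + 1 - 1 - i = (m - 1 - i) + 1 := by omega
    have h2 := X_twoterm A q hq (by omega : (m - 1 - i) + 1 ≤ k)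
    rw [h1]
    have : pf A q (i + 1) * X A q (m - 1 - i + 1) -
        pf A q (i + 1) * (q ^ (m - 1 - i + 1) * X A q (m - 1 - i + 1)) =
        pf A q (i + 1) * ((1 - q ^ (m - 1 - i + 1)) * X A q (m - 1 - i + 1)) := by
      ring
    rw [this, h2]
    ring
  rw [Finset.sum_congr rfl hterm, Finset.sum_sub_distrib, ← Finset.mul_sum, ← Finset.mul_sum,
    ← Y, ← Z]

include hq in
lemma Y_eq : ∀ j ≤ k, Y A q j = (j : K) * X A q j := by
  intro j
  induction j with
  | zero => intro _; simp [Y]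
  | succ m ih =>
    intro hjk
    have ihm := ih (by omega)
    have hne := one_sub_ne q hq (Nat.le_add_left 1 m) hjk
    have h1 := YZ_eq A q hq hjk
    have h2 := ZV_eq A q hq hjk
    have h3 := ZV_eq A q hq (by omega : m ≤ k)
    have h4 := V_sub A q m
    have h5 := U_eq A q hq (m + 1) hjk
    have h6 := X_twoterm A q hq hjk
    -- (1 - q^(m+1)) * Y (m+1) = (m+1) * (1 - q^(m+1)) * X (m+1)
    have key : (1 - q ^ (m + 1)) * Y A q (m + 1) =
        (((m : K) + 1) * ((1 - q ^ (m + 1)) * X A q (m + 1))) := by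
      have e1 : (1 - q ^ (m + 1)) * Y A q (m + 1) =
          (Y A q (m + 1) - Z A q (m + 1)) + (Z A q (m + 1) - q ^ (m + 1) * Y A q (m + 1)) := by
        ring
      rw [e1, h1, h2]
      have e2 : Z A q m = V A q m + q ^ m * ((m : K) * X A q m) := by rw [h3, ihm]
      rw [ihm, e2]
      have e3 : A * ((m : K) * X A q m) - A⁻¹ * (V A q m + q ^ m * ((m : K) * X A q m)) +
          (V A q (m + 1) + q ^ (m + 1) * Y A q (m + 1) - q ^ (m + 1) * Y A q (m + 1)) =
          (m : K) * (X A q m * (A - A⁻¹ * q ^ m)) + (V A q (m + 1) - A⁻¹ * V A q m) := by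
        ring
      rw [e3, h4, h5, ← h6]
      ring
    have key' : (1 - q ^ (m + 1)) * Y A q (m + 1) =
        (1 - q ^ (m + 1)) * (((m : K) + 1) * X A q (m + 1)) := by rw [key]; ring
    have := mul_left_cancel₀ hne key'
    rw [this]
    push_cast
    ring

end

section
variable (A q : K) {k : ℕ} (hq : ∀ j : ℕ, 1 ≤ j → j ≤ k → q ^ j ≠ 1)

include hq in
lemma E_eq_X : ∀ j ≤ k, E (pf A q) j = X A q j := by
  intro j
  induction j using Nat.strong_induction_on with
  | _ j ih =>
    intro hj
    match j with
    | 0 => rw [E_zero, X_zero]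
    | m + 1 =>
      have hrec := E_rec (pf A q) (m + 1)
      have h1 : ∑ n ∈ Icc 1 (m + 1), pf A q n * E (pf A q) (m + 1 - n) =
          ∑ n ∈ Icc 1 (m + 1), pf A q n * X A q (m + 1 - n) := by
        refine Finset.sum_congr rfl fun n hn => ?_
        rw [Finset.mem_Icc] at hn
        rw [ih (m + 1 - n) (by omega) (by omega)]
      have h2 : ∑ n ∈ Icc 1 (m + 1), pf A q n * X A q (m + 1 - n) = Y A q (m + 1) := by
        rw [← Finset.Ico_add_one_right_eq_Icc, Finset.sum_Ico_eq_sum_range]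
        rw [Y]
        refine Finset.sum_congr (by norm_num) fun i hi => ?_
        rw [Finset.mem_range] at hi
        have e1 : 1 + i = i + 1 := by omega
        have e2 : m + 1 - (i + 1) = m + 1 - 1 - i := by omega
        rw [e1, e2]
      rw [h1, h2, Y_eq A q hq (m + 1) hj] at hrec
      have hm1 : ((m : K) + 1) ≠ 0 := Nat.cast_add_one_ne_zero m
      have : ((m + 1 : ℕ) : K) = (m : K) + 1 := by push_cast; ring
      rw [this] at hrec
      exact mul_left_cancel₀ hm1 hrec

end
end QBinAux

/-- The q-binomial theorem: for elements `A, q` of a field with `A ≠ 0` and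
`q^j ≠ 1` for `1 ≤ j ≤ k`,
`∑_{k_1+2k_2+⋯=k} ∏_n (1/(k_n! n^{k_n}))·((Aⁿ-A⁻ⁿ)/(1-qⁿ))^{k_n}
  = ∏_{j=1}^k (A - A⁻¹q^{j-1})/(1 - q^j)`,
the sum being indexed by partitions `μ` of `k` (with `k_n` the multiplicity of
the part `n`, so that this is an identity of rational functions in `q` and `A`). -/
theorem qbinomial_identity {K : Type*} [Field K] [CharZero K] (A q : K) (hA : A ≠ 0)
    (k : ℕ) (hq : ∀ j : ℕ, 1 ≤ j → j ≤ k → q ^ j ≠ 1) :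
    ∑ μ : Nat.Partition k,
        ∏ n ∈ μ.parts.toFinset,
          (1 / (((μ.parts.count n).factorial : K) * (n : K) ^ (μ.parts.count n))) *
            ((A ^ n - A⁻¹ ^ n) / (1 - q ^ n)) ^ (μ.parts.count n) =
      ∏ j ∈ Finset.Icc 1 k, (A - A⁻¹ * q ^ (j - 1)) / (1 - q ^ j) := by
  have hL : ∑ μ : Nat.Partition k,
      ∏ n ∈ μ.parts.toFinset,
        (1 / (((μ.parts.count n).factorial : K) * (n : K) ^ (μ.parts.count n))) *
          ((A ^ n - A⁻¹ ^ n) / (1 - q ^ n)) ^ (μ.parts.count n) =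
      QBinAux.E (QBinAux.pf A q) k := by
    rw [QBinAux.E]
    refine Finset.sum_congr rfl fun μ _ => ?_
    rw [QBinAux.w]
    refine Finset.prod_subset
      (fun n hn => QBinAux.mem_Icc_of_mem_parts μ (Multiset.mem_toFinset.mp hn)) ?_
    intro n _ hn
    rw [Multiset.count_eq_zero_of_notMem (fun h => hn (Multiset.mem_toFinset.mpr h))]
    simp
  rw [hL, QBinAux.E_eq_X A q hq k le_rfl, QBinAux.X]
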